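/- For any ring R, √Δ(R) ∩ Id(R) = {0}, i.e., the only idempotent lying in √Δ(R) is 0. -/
import Mathlib

/-- Δ(R) = {x : 1 - x*u is a unit for every unit u}. -/
def Delta (R : Type*) [Ring R] : Set R :=
  {x | ∀ u : R, IsUnit u → IsUnit (1 - x * u)}

/-- √Δ(R) = {x : x^n ∈ Δ(R) for some n ≥ 1}. -/
def sqrtDelta (R : Type*) [Ring R] : Set R :=
  {x | ∃ n : ℕ, 1 ≤ n ∧ x ^ n ∈ Delta R}

theorem stmt_8 {R : Type*} [Ring R] (e : R) (he : e * e = e)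
    (hd : e ∈ sqrtDelta R) : e = 0 := by
  obtain ⟨n, hn, hΔ⟩ := hd
  have hpow : ∀ m : ℕ, 1 ≤ m → e ^ m = e := by
    intro m hm
    induction m with
    | zero => omega
    | succ k ih =>
      rcases Nat.eq_zero_or_pos k with hk | hk
      · simp [hk]
      · rw [pow_succ, ih hk, he]
  have hu : IsUnit (1 - e) := by
    have := hΔ 1 isUnit_one
    rwa [hpow n hn, mul_one] at this
  obtain ⟨u, hu⟩ := hu
  have h0 : (1 - e) * e = 0 := by rw [sub_mul, one_mul, he, sub_self]
  have : (↑u⁻¹ : R) * ((1 - e) * e) = e := by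
    rw [← hu, ← mul_assoc, Units.inv_mul, one_mul]
  rw [h0, mul_zero] at this
  exact this.symm
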